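/- Work in the Euclidean plane ℝ² (EuclideanSpace ℝ (Fin 2)). Let ℓ > 0 and let x₁, v₁, x₂, v₂ ∈ ℝ² satisfy: ‖x₁ − v₁‖ ≤ ℓ, ‖x₂ − v₂‖ ≤ ℓ, ‖x₁ − v₂‖ ≥ ℓ, ‖x₂ − v₁‖ ≥ ℓ, ‖v₁ − v₂‖ ≥ ℓ, and ‖x₁ − x₂‖ ≥ 2·ℓ. Then for all s, t ∈ [0,1], ‖(x₁ + s•(v₁ − x₁)) − (x₂ + t•(v₂ − x₂))‖ ≥ (√3/2)·ℓ. In particular, when ℓ > (4/√3)·r, two robots of radius r moving along the straight segments from x₁ to v₁ and from x₂ to v₂ respectively remain collision-free, since (√3/2)·ℓ > 2r. -/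

import Mathlib

lemma combo_right {E : Type*} [NormedAddCommGroup E] [InnerProductSpace ℝ E]
    (u c : E) (t : ℝ) :
    ‖u - t • c‖^2 = (1-t)*‖u‖^2 + t*‖u-c‖^2 - t*(1-t)*‖c‖^2 := by
  have h1 : ‖u - t • c‖^2 = ‖u‖^2 - 2 * (t * inner ℝ u c) + t^2 * ‖c‖^2 := by
    rw [@norm_sub_sq_real, inner_smul_right, norm_smul, Real.norm_eq_abs, mul_pow, sq_abs]
  have h2 : ‖u - c‖^2 = ‖u‖^2 - 2 * (inner ℝ u c : ℝ) + ‖c‖^2 := by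
    rw [@norm_sub_sq_real]
  rw [h1, h2]; ring

lemma combo_left {E : Type*} [NormedAddCommGroup E] [InnerProductSpace ℝ E]
    (w b : E) (s : ℝ) :
    ‖w + s • b‖^2 = (1-s)*‖w‖^2 + s*‖w+b‖^2 - s*(1-s)*‖b‖^2 := by
  have h1 : ‖w + s • b‖^2 = ‖w‖^2 + 2 * (s * inner ℝ w b) + s^2 * ‖b‖^2 := by
    rw [@norm_add_sq_real, inner_smul_right, norm_smul, Real.norm_eq_abs, mul_pow, sq_abs]
  have h2 : ‖w + b‖^2 = ‖w‖^2 + 2 * (inner ℝ w b : ℝ) + ‖b‖^2 := by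
    rw [@norm_add_sq_real]
  rw [h1, h2]; ring

lemma poly_key (s t : ℝ) (hs0 : 0 ≤ s) (hs1 : s ≤ 1) (ht0 : 0 ≤ t) (ht1 : t ≤ 1) :
    (3:ℝ)/4 ≤ s^2 + t^2 + 3*s*t - 4*s - 4*t + 4 := by
  nlinarith [sq_nonneg (s - 1/2), sq_nonneg (2*t + 3*s - 4),
    mul_nonneg (sub_nonneg.2 hs1) (sub_nonneg.2 ht1),
    mul_nonneg (sub_nonneg.2 hs1) ht0, mul_nonneg hs0 (sub_nonneg.2 ht1),
    mul_nonneg hs0 ht0, sq_nonneg (1-s), sq_nonneg (1-t)]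

lemma expr_bound (ℓ s t A B C D β γ : ℝ)
    (hℓ : 0 < ℓ) (hs0 : 0 ≤ s) (hs1 : s ≤ 1) (ht0 : 0 ≤ t) (ht1 : t ≤ 1)
    (hA : 4*ℓ^2 ≤ A) (hB : ℓ^2 ≤ B) (hC : ℓ^2 ≤ C) (hD : ℓ^2 ≤ D)
    (hβ : β ≤ ℓ^2) (hγ : γ ≤ ℓ^2) :
    3/4*ℓ^2 ≤ (1-t)*((1-s)*A + s*B - s*(1-s)*β)
      + t*((1-s)*C + s*D - s*(1-s)*β) - t*(1-t)*γ := by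
  have k1 : 0 ≤ (1-t)*(1-s)*(A - 4*ℓ^2) :=
    mul_nonneg (mul_nonneg (by linarith) (by linarith)) (by linarith)
  have k2 : 0 ≤ (1-t)*s*(B - ℓ^2) :=
    mul_nonneg (mul_nonneg (by linarith) hs0) (by linarith)
  have k3 : 0 ≤ t*(1-s)*(C - ℓ^2) :=
    mul_nonneg (mul_nonneg ht0 (by linarith)) (by linarith)
  have k4 : 0 ≤ t*s*(D - ℓ^2) :=
    mul_nonneg (mul_nonneg ht0 hs0) (by linarith)
  have k5 : 0 ≤ s*(1-s)*(ℓ^2 - β) :=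
    mul_nonneg (mul_nonneg hs0 (by linarith)) (by linarith)
  have k6 : 0 ≤ t*(1-t)*(ℓ^2 - γ) :=
    mul_nonneg (mul_nonneg ht0 (by linarith)) (by linarith)
  have hg : 3/4*ℓ^2 ≤ ℓ^2 * (s^2 + t^2 + 3*s*t - 4*s - 4*t + 4) := by
    have hp := poly_key s t hs0 hs1 ht0 ht1
    nlinarith [sq_nonneg ℓ]
  nlinarith [k1, k2, k3, k4, k5, k6, hg]

theorem assign_paths_collision_free
    (ℓ : ℝ) (hℓ : 0 < ℓ)
    (x₁ v₁ x₂ v₂ : EuclideanSpace ℝ (Fin 2))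
    (h₁ : ‖x₁ - v₁‖ ≤ ℓ) (h₂ : ‖x₂ - v₂‖ ≤ ℓ)
    (h₃ : ℓ ≤ ‖x₁ - v₂‖) (h₄ : ℓ ≤ ‖x₂ - v₁‖)
    (h₅ : ℓ ≤ ‖v₁ - v₂‖) (h₆ : 2 * ℓ ≤ ‖x₁ - x₂‖) :
    (∀ s ∈ Set.Icc (0 : ℝ) 1, ∀ t ∈ Set.Icc (0 : ℝ) 1,
        Real.sqrt 3 / 2 * ℓ ≤ ‖(x₁ + s • (v₁ - x₁)) - (x₂ + t • (v₂ - x₂))‖) ∧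
      ∀ r : ℝ, 0 < r → 4 / Real.sqrt 3 * r < ℓ →
        ∀ s ∈ Set.Icc (0 : ℝ) 1, ∀ t ∈ Set.Icc (0 : ℝ) 1,
          2 * r < ‖(x₁ + s • (v₁ - x₁)) - (x₂ + t • (v₂ - x₂))‖ := by
  have main : ∀ s ∈ Set.Icc (0 : ℝ) 1, ∀ t ∈ Set.Icc (0 : ℝ) 1,
      Real.sqrt 3 / 2 * ℓ ≤ ‖(x₁ + s • (v₁ - x₁)) - (x₂ + t • (v₂ - x₂))‖ := by
    intro s hs t ht
    obtain ⟨hs0, hs1⟩ := hs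
    obtain ⟨ht0, ht1⟩ := ht
    have key : (3:ℝ)/4 * ℓ^2 ≤ ‖(x₁ + s • (v₁ - x₁)) - (x₂ + t • (v₂ - x₂))‖^2 := by
      have e1 : (x₁ + s • (v₁ - x₁)) - (x₂ + t • (v₂ - x₂))
          = ((x₁ + s • (v₁ - x₁)) - x₂) - t • (v₂ - x₂) := by abel
      rw [e1, combo_right]
      have e2 : ‖(x₁ + s • (v₁ - x₁)) - x₂‖^2
          = (1-s)*‖x₁ - x₂‖^2 + s*‖v₁ - x₂‖^2 - s*(1-s)*‖v₁ - x₁‖^2 := by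
        have ha : (x₁ + s • (v₁ - x₁)) - x₂ = (x₁ - x₂) + s • (v₁ - x₁) := by abel
        have hb : (x₁ - x₂) + (v₁ - x₁) = v₁ - x₂ := by abel
        rw [ha, combo_left, hb]
      have e3 : ‖(x₁ + s • (v₁ - x₁)) - x₂ - (v₂ - x₂)‖^2
          = (1-s)*‖x₁ - v₂‖^2 + s*‖v₁ - v₂‖^2 - s*(1-s)*‖v₁ - x₁‖^2 := by
        have ha : (x₁ + s • (v₁ - x₁)) - x₂ - (v₂ - x₂) = (x₁ - v₂) + s • (v₁ - x₁) := by
          abel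
        have hb : (x₁ - v₂) + (v₁ - x₁) = v₁ - v₂ := by abel
        rw [ha, combo_left, hb]
      rw [e2, e3]
      have b₁ : ‖v₁ - x₁‖^2 ≤ ℓ^2 := by
        rw [norm_sub_rev]; exact pow_le_pow_left₀ (norm_nonneg _) h₁ 2
      have b₂ : ‖v₂ - x₂‖^2 ≤ ℓ^2 := by
        rw [norm_sub_rev]; exact pow_le_pow_left₀ (norm_nonneg _) h₂ 2
      have b₃ : ℓ^2 ≤ ‖x₁ - v₂‖^2 := pow_le_pow_left₀ hℓ.le h₃ 2
      have b₄ : ℓ^2 ≤ ‖v₁ - x₂‖^2 := by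
        rw [norm_sub_rev]; exact pow_le_pow_left₀ hℓ.le h₄ 2
      have b₅ : ℓ^2 ≤ ‖v₁ - v₂‖^2 := pow_le_pow_left₀ hℓ.le h₅ 2
      have b₆ : 4*ℓ^2 ≤ ‖x₁ - x₂‖^2 := by
        have h := pow_le_pow_left₀ (by positivity : (0:ℝ) ≤ 2*ℓ) h₆ 2
        calc 4*ℓ^2 = (2*ℓ)^2 := by ring
          _ ≤ ‖x₁ - x₂‖^2 := h
      have := expr_bound ℓ s t (‖x₁ - x₂‖^2) (‖v₁ - x₂‖^2) (‖x₁ - v₂‖^2)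
        (‖v₁ - v₂‖^2) (‖v₁ - x₁‖^2) (‖v₂ - x₂‖^2)
        hℓ hs0 hs1 ht0 ht1 b₆ b₄ b₃ b₅ b₁ b₂
      linarith
    have hnn : 0 ≤ ‖(x₁ + s • (v₁ - x₁)) - (x₂ + t • (v₂ - x₂))‖ := norm_nonneg _
    have hside : (Real.sqrt 3 / 2 * ℓ)^2 = 3/4 * ℓ^2 := by
      rw [mul_pow, div_pow, Real.sq_sqrt (by norm_num : (0:ℝ) ≤ 3)]
      ring
    have hpos : 0 ≤ Real.sqrt 3 / 2 * ℓ := by positivity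
    nlinarith [key, hside, hnn, hpos]
  refine ⟨main, ?_⟩
  intro r hr hrl s hs t ht
  have h3 : (0:ℝ) < Real.sqrt 3 := Real.sqrt_pos.2 (by norm_num)
  have h2r : 2 * r < Real.sqrt 3 / 2 * ℓ := by
    have hm := mul_lt_mul_of_pos_left hrl (by positivity : (0:ℝ) < Real.sqrt 3 / 2)
    have he : Real.sqrt 3 / 2 * (4 / Real.sqrt 3 * r) = 2 * r := by
      field_simp
      ring
    linarith [hm, he.ge, he.le]
  exact lt_of_lt_of_le h2r (main s hs t ht)
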